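/- In a discounted MDP, suppose π_{i+1} = π_i ⊕ U where U is a well-defined subset of T^{π_i} whose set of states equals S^{π_i} (a greedy Policy Iteration step), and let d = |S^{π_i}| ≥ 1. Then there exist d pairwise distinct policies π^(1), …, π^(d) with π_i ≺ π^(1) ⪯ π^(2) ⪯ … ⪯ π^(d) = π_{i+1}. -/

import Mathlib

/-- The transition matrix induced by a policy. -/
noncomputable def polMatrix {n k : ℕ} (P : Fin n → Fin k → Fin n → ℝ)
    (π : Fin n → Fin k) : Matrix (Fin n) (Fin n) ℝ :=
  Matrix.of fun s s' => P s (π s) s'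

/-- The reward vector induced by a policy. -/
noncomputable def polReward {n k : ℕ} (r : Fin n → Fin k → ℝ)
    (π : Fin n → Fin k) : Fin n → ℝ :=
  fun s => r s (π s)

/-- The value vector of a policy: `v^π = ∑_{i=0}^∞ γ^i (P^π)^i r^π`. -/
noncomputable def polValue {n k : ℕ} (P : Fin n → Fin k → Fin n → ℝ)
    (r : Fin n → Fin k → ℝ) (γ : ℝ) (π : Fin n → Fin k) : Fin n → ℝ :=
  ∑' i : ℕ, γ ^ i • (polMatrix P π ^ i).mulVec (polReward r π)

/-- `π ⪯ π'` : the policy `π'` dominates `π`. -/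
def Dominates {n k : ℕ} (P : Fin n → Fin k → Fin n → ℝ) (r : Fin n → Fin k → ℝ)
    (γ : ℝ) (π π' : Fin n → Fin k) : Prop :=
  ∀ s, polValue P r γ π s ≤ polValue P r γ π' s

/-- `π ≺ π'` : the policy `π'` strictly dominates `π`. -/
def StrictDominates {n k : ℕ} (P : Fin n → Fin k → Fin n → ℝ) (r : Fin n → Fin k → ℝ)
    (γ : ℝ) (π π' : Fin n → Fin k) : Prop :=
  Dominates P r γ π π' ∧ ∃ s, polValue P r γ π s < polValue P r γ π' s

/-- A set of state-action pairs is well-defined if it contains each state at most once. -/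
def WellDefined {n k : ℕ} (U : Set (Fin n × Fin k)) : Prop :=
  ∀ s a a', (s, a) ∈ U → (s, a') ∈ U → a = a'

-- `π ⊕ U` : the policy obtained from `π` by switching the action at `s` to `a`
-- for each `(s, a) ∈ U` (intended for well-defined `U`).
open Classical in
noncomputable def switch {n k : ℕ} (π : Fin n → Fin k) (U : Set (Fin n × Fin k)) :
    Fin n → Fin k :=
  fun s => if h : ∃ a, (s, a) ∈ U then h.choose else π s

/-- The improvement set `T^π = {(s,a) : π ⊕ {(s,a)} ≻ π}`. -/
def improvementSet {n k : ℕ} (P : Fin n → Fin k → Fin n → ℝ) (r : Fin n → Fin k → ℝ)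
    (γ : ℝ) (π : Fin n → Fin k) : Set (Fin n × Fin k) :=
  {p | StrictDominates P r γ π (Function.update π p.1 p.2)}

/-- The set of improvement states `S^π`. -/
def improvementStates {n k : ℕ} (P : Fin n → Fin k → Fin n → ℝ) (r : Fin n → Fin k → ℝ)
    (γ : ℝ) (π : Fin n → Fin k) : Set (Fin n) :=
  {s | ∃ a, (s, a) ∈ improvementSet P r γ π}

section core
variable {n k : ℕ} {P : Fin n → Fin k → Fin n → ℝ} {r : Fin n → Fin k → ℝ} {γ : ℝ}
variable (hP0 : ∀ s a s', 0 ≤ P s a s') (hP1 : ∀ s a, ∑ s', P s a s' = 1)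
variable (hγ0 : 0 ≤ γ) (hγ1 : γ < 1)
include hP0 hP1 hγ0 hγ1

lemma rowstoch
    (σ : Fin n → Fin k) (i : ℕ) (s : Fin n) :
    (∀ t, 0 ≤ (polMatrix P σ ^ i) s t) ∧ ∑ t, (polMatrix P σ ^ i) s t = 1 := by
  induction i generalizing s with
  | zero =>
    simp [Matrix.one_apply]
    intro t; positivity
  | succ m ih =>
    constructor
    · intro t
      rw [pow_succ', Matrix.mul_apply]
      apply Finset.sum_nonneg
      intro u _
      exact mul_nonneg (hP0 s (σ s) u) ((ih u).1 t)
    · have : ∀ t, (polMatrix P σ ^ (m+1)) s t = ∑ u, polMatrix P σ s u * (polMatrix P σ ^ m) u t := by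
        intro t; rw [pow_succ', Matrix.mul_apply]
      simp_rw [this]
      rw [Finset.sum_comm]
      have : ∀ u ∈ Finset.univ, ∑ t, polMatrix P σ s u * (polMatrix P σ ^ m) u t = polMatrix P σ s u := by
        intro u _
        rw [← Finset.mul_sum, (ih u).2, mul_one]
      rw [Finset.sum_congr rfl this]
      exact hP1 s (σ s)

lemma summable_pt (σ : Fin n → Fin k) (x : Fin n → ℝ) (s : Fin n) :
    Summable fun i : ℕ => γ ^ i * ((polMatrix P σ ^ i).mulVec x) s := by
  apply Summable.of_norm_bounded (g := fun i => ‖x‖ * γ ^ i)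
    ((summable_geometric_of_lt_one hγ0 hγ1).mul_left ‖x‖)
  intro i
  rw [norm_mul, norm_pow, Real.norm_eq_abs, abs_of_nonneg hγ0, mul_comm]
  apply mul_le_mul_of_nonneg_right _ (pow_nonneg hγ0 i)
  rw [Real.norm_eq_abs, Matrix.mulVec, dotProduct]
  calc |∑ t, (polMatrix P σ ^ i) s t * x t| ≤ ∑ t, |(polMatrix P σ ^ i) s t * x t| :=
        Finset.abs_sum_le_sum_abs _ _
    _ ≤ ∑ t, (polMatrix P σ ^ i) s t * ‖x‖ := by
        apply Finset.sum_le_sum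
        intro t _
        rw [abs_mul, abs_of_nonneg ((rowstoch hP0 hP1 hγ0 hγ1 σ i s).1 t)]
        exact mul_le_mul_of_nonneg_left (norm_le_pi_norm x t)
          ((rowstoch hP0 hP1 hγ0 hγ1 σ i s).1 t)
    _ = ‖x‖ := by rw [← Finset.sum_mul, (rowstoch hP0 hP1 hγ0 hγ1 σ i s).2, one_mul]

lemma polValue_apply (σ : Fin n → Fin k) (s : Fin n) :
    polValue P r γ σ s = ∑' i : ℕ, γ ^ i * ((polMatrix P σ ^ i).mulVec (polReward r σ)) s := by
  rw [polValue, tsum_apply]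
  · simp [Pi.smul_apply]
  · rw [Pi.summable]
    intro t
    simpa using summable_pt hP0 hP1 hγ0 hγ1 σ (polReward r σ) t

lemma bellman (σ : Fin n → Fin k) (s : Fin n) :
    polValue P r γ σ s = r s (σ s) + γ * ∑ t, P s (σ s) t * polValue P r γ σ t := by
  rw [polValue_apply hP0 hP1 hγ0 hγ1]
  rw [Summable.tsum_eq_zero_add (summable_pt hP0 hP1 hγ0 hγ1 σ _ s)]
  congr 1
  · simp [Matrix.one_mulVec, polReward]
  · have key : ∀ i : ℕ, γ ^ (i+1) * ((polMatrix P σ ^ (i+1)).mulVec (polReward r σ)) s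
        = ∑ t, γ * (P s (σ s) t * (γ ^ i * ((polMatrix P σ ^ i).mulVec (polReward r σ)) t)) := by
      intro i
      rw [pow_succ' (polMatrix P σ), ← Matrix.mulVec_mulVec]
      rw [Matrix.mulVec, dotProduct, Finset.mul_sum]
      apply Finset.sum_congr rfl
      intro t _
      show γ ^ (i+1) * (polMatrix P σ s t * _) = _
      rw [show polMatrix P σ s t = P s (σ s) t from rfl]
      ring
    rw [tsum_congr key, Summable.tsum_finsetSum (fun t _ => by
      apply Summable.mul_left
      exact (summable_pt hP0 hP1 hγ0 hγ1 σ (polReward r σ) t).mul_left _)]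
    rw [Finset.mul_sum]
    apply Finset.sum_congr rfl
    intro t _
    rw [tsum_mul_left, tsum_mul_left, ← polValue_apply hP0 hP1 hγ0 hγ1]


/-- Comparison: if vσ ≤ one-step Bellman backup of vσ via σ', then σ' dominates σ. -/
lemma dominates_of (σ σ' : Fin n → Fin k)
    (h : ∀ s, polValue P r γ σ s ≤ r s (σ' s) + γ * ∑ t, P s (σ' s) t * polValue P r γ σ t) :
    Dominates P r γ σ σ' := by
  intro s₀
  set u : Fin n → ℝ := fun t => polValue P r γ σ' t - polValue P r γ σ t with hu
  suffices hsuff : 0 ≤ u s₀ by simpa [hu] using hsuff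
  obtain ⟨t₀, _, ht₀⟩ := Finset.exists_min_image Finset.univ u ⟨s₀, Finset.mem_univ s₀⟩
  have hrec : u t₀ ≥ γ * ∑ t, P t₀ (σ' t₀) t * u t := by
    have hb := bellman (r := r) hP0 hP1 hγ0 hγ1 σ' t₀
    have := h t₀
    simp only [hu]
    have : polValue P r γ σ' t₀ - polValue P r γ σ t₀ ≥
        (r t₀ (σ' t₀) + γ * ∑ t, P t₀ (σ' t₀) t * polValue P r γ σ' t)
        - (r t₀ (σ' t₀) + γ * ∑ t, P t₀ (σ' t₀) t * polValue P r γ σ t) := by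
      rw [← hb]; linarith [h t₀]
    calc polValue P r γ σ' t₀ - polValue P r γ σ t₀ ≥ _ := this
      _ = γ * ∑ t, P t₀ (σ' t₀) t * (polValue P r γ σ' t - polValue P r γ σ t) := by
          simp only [mul_sub, Finset.sum_sub_distrib, Finset.mul_sum]
          ring
  have hsum : ∑ t, P t₀ (σ' t₀) t * u t ≥ ∑ t, P t₀ (σ' t₀) t * u t₀ := by
    apply Finset.sum_le_sum
    intro t _
    exact mul_le_mul_of_nonneg_left (ht₀ t (Finset.mem_univ t)) (hP0 _ _ _)
  have hsum2 : ∑ t, P t₀ (σ' t₀) t * u t₀ = u t₀ := by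
    rw [← Finset.sum_mul, hP1, one_mul]
  have h1 : u t₀ ≥ γ * u t₀ := by
    calc u t₀ ≥ γ * ∑ t, P t₀ (σ' t₀) t * u t := hrec
      _ ≥ γ * u t₀ := by
          apply mul_le_mul_of_nonneg_left _ hγ0
          rw [← hsum2]; exact hsum
  have h2 : 0 ≤ u t₀ := by nlinarith
  exact le_trans h2 (ht₀ s₀ (Finset.mem_univ s₀))

/-- Dual comparison. -/
lemma dominated_of (σ σ' : Fin n → Fin k)
    (h : ∀ s, r s (σ' s) + γ * ∑ t, P s (σ' s) t * polValue P r γ σ t ≤ polValue P r γ σ s) :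
    Dominates P r γ σ' σ := by
  intro s₀
  set u : Fin n → ℝ := fun t => polValue P r γ σ t - polValue P r γ σ' t with hu
  suffices hsuff : 0 ≤ u s₀ by simpa [hu] using hsuff
  obtain ⟨t₀, _, ht₀⟩ := Finset.exists_min_image Finset.univ u ⟨s₀, Finset.mem_univ s₀⟩
  have hrec : u t₀ ≥ γ * ∑ t, P t₀ (σ' t₀) t * u t := by
    have hb := bellman (r := r) hP0 hP1 hγ0 hγ1 σ' t₀
    have : polValue P r γ σ t₀ - polValue P r γ σ' t₀ ≥
        (r t₀ (σ' t₀) + γ * ∑ t, P t₀ (σ' t₀) t * polValue P r γ σ t)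
        - (r t₀ (σ' t₀) + γ * ∑ t, P t₀ (σ' t₀) t * polValue P r γ σ' t) := by
      rw [← hb]; linarith [h t₀]
    calc polValue P r γ σ t₀ - polValue P r γ σ' t₀ ≥ _ := this
      _ = γ * ∑ t, P t₀ (σ' t₀) t * (polValue P r γ σ t - polValue P r γ σ' t) := by
          simp only [mul_sub, Finset.sum_sub_distrib, Finset.mul_sum]
          ring
  have hsum : ∑ t, P t₀ (σ' t₀) t * u t ≥ ∑ t, P t₀ (σ' t₀) t * u t₀ := by
    apply Finset.sum_le_sum
    intro t _
    exact mul_le_mul_of_nonneg_left (ht₀ t (Finset.mem_univ t)) (hP0 _ _ _)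
  have hsum2 : ∑ t, P t₀ (σ' t₀) t * u t₀ = u t₀ := by
    rw [← Finset.sum_mul, hP1, one_mul]
  have h1 : u t₀ ≥ γ * u t₀ := by
    calc u t₀ ≥ γ * ∑ t, P t₀ (σ' t₀) t * u t := hrec
      _ ≥ γ * u t₀ := by
          apply mul_le_mul_of_nonneg_left _ hγ0
          rw [← hsum2]; exact hsum
  have h2 : 0 ≤ u t₀ := by nlinarith
  exact le_trans h2 (ht₀ s₀ (Finset.mem_univ s₀))


/-- Key inequality: an improving pair has nonnegative Bellman advantage. -/
lemma delta_nonneg {π : Fin n → Fin k} {s : Fin n} {a : Fin k}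
    (h : (s, a) ∈ improvementSet P r γ π) :
    polValue P r γ π s ≤ r s a + γ * ∑ t, P s a t * polValue P r γ π t := by
  obtain ⟨hdom, t₁, ht₁⟩ := h
  set τ := Function.update π s a with hτ
  set u : Fin n → ℝ := fun t => polValue P r γ τ t - polValue P r γ π t with hu
  by_contra hlt
  push_neg at hlt
  obtain ⟨t₀, _, ht₀⟩ := Finset.exists_max_image Finset.univ u ⟨t₁, Finset.mem_univ t₁⟩
  have hM : 0 < u t₀ := lt_of_lt_of_le (by simp [hu]; linarith) (ht₀ t₁ (Finset.mem_univ t₁))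
  have hsum : ∀ b, ∑ t, P t₀ b t * u t ≤ u t₀ := by
    intro b
    calc ∑ t, P t₀ b t * u t ≤ ∑ t, P t₀ b t * u t₀ :=
          Finset.sum_le_sum fun t _ => mul_le_mul_of_nonneg_left (ht₀ t (Finset.mem_univ t)) (hP0 _ _ _)
      _ = u t₀ := by rw [← Finset.sum_mul, hP1, one_mul]
  have hbτ := bellman (r := r) hP0 hP1 hγ0 hγ1 τ t₀
  have hbπ := bellman (r := r) hP0 hP1 hγ0 hγ1 π t₀
  have key : u t₀ ≤ γ * u t₀ := by
    by_cases hcase : t₀ = s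
    · subst hcase
      have hτs : τ t₀ = a := Function.update_self t₀ a π
      have : u t₀ = (r t₀ a + γ * ∑ t, P t₀ a t * polValue P r γ π t - polValue P r γ π t₀)
          + γ * ∑ t, P t₀ a t * u t := by
        simp only [hu]
        rw [hbτ, hτs]
        simp only [mul_sub, Finset.sum_sub_distrib, Finset.mul_sum]
        ring
      have h2 : γ * ∑ t, P t₀ a t * u t ≤ γ * u t₀ :=
        mul_le_mul_of_nonneg_left (hsum a) hγ0
      linarith
    · have hτs : τ t₀ = π t₀ := Function.update_of_ne hcase a π
      have : u t₀ = γ * ∑ t, P t₀ (π t₀) t * u t := by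
        simp only [hu]
        rw [hbτ, hτs, hbπ]
        simp only [mul_sub, Finset.sum_sub_distrib, Finset.mul_sum]
        ring
      have h2 : γ * ∑ t, P t₀ (π t₀) t * u t ≤ γ * u t₀ :=
        mul_le_mul_of_nonneg_left (hsum (π t₀)) hγ0
      linarith
  nlinarith

omit hP0 hP1 hγ0 hγ1 in
lemma action_ne {π : Fin n → Fin k} {s : Fin n} {a : Fin k}
    (h : (s, a) ∈ improvementSet P r γ π) : a ≠ π s := by
  intro hEq
  obtain ⟨_, t, ht⟩ := h
  rw [show Function.update π (s,a).1 (s,a).2 = π by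
    simp only [hEq]; exact Function.update_eq_self s π] at ht
  exact lt_irrefl _ ht

omit hP0 hP1 hγ0 hγ1 in
lemma switch_covered {π : Fin n → Fin k} {V : Set (Fin n × Fin k)} (hwdV : WellDefined V)
    {s : Fin n} {a : Fin k} (h : (s, a) ∈ V) : switch π V s = a := by
  have hex : ∃ b, (s, b) ∈ V := ⟨a, h⟩
  rw [switch, dif_pos hex]
  exact hwdV s _ a hex.choose_spec h

omit hP0 hP1 hγ0 hγ1 in
lemma switch_uncovered {π : Fin n → Fin k} {V : Set (Fin n × Fin k)}
    {s : Fin n} (h : ¬∃ a, (s, a) ∈ V) : switch π V s = π s := by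
  rw [switch, dif_neg h]

omit hP0 hP1 hγ0 hγ1 in
lemma wd_subset {U V : Set (Fin n × Fin k)} (hwd : WellDefined U) (hV : V ⊆ U) :
    WellDefined V := fun s a a' h h' => hwd s a a' (hV h) (hV h')

lemma F1 {π : Fin n → Fin k} {U : Set (Fin n × Fin k)} (hwd : WellDefined U)
    (hsub : U ⊆ improvementSet P r γ π) {V : Set (Fin n × Fin k)} (hV : V ⊆ U) :
    Dominates P r γ π (switch π V) := by
  apply dominates_of hP0 hP1 hγ0 hγ1
  intro s
  by_cases hex : ∃ a, (s, a) ∈ V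
  · obtain ⟨a, ha⟩ := hex
    rw [switch_covered (wd_subset hwd hV) ha]
    exact delta_nonneg hP0 hP1 hγ0 hγ1 (hsub (hV ha))
  · rw [switch_uncovered hex]
    exact le_of_eq (bellman hP0 hP1 hγ0 hγ1 π s)

lemma F2 {π : Fin n → Fin k} {U : Set (Fin n × Fin k)} (hwd : WellDefined U)
    (hsub : U ⊆ improvementSet P r γ π) (W : Finset (Fin n × Fin k))
    (hWU : ↑W ⊆ U) (hne : W.Nonempty) :
    ∃ p ∈ W, Dominates P r γ (switch π ↑(W.erase p)) (switch π ↑W) := by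
  set σ := switch π (↑W : Set (Fin n × Fin k)) with hσ
  have hwdW : WellDefined (↑W : Set (Fin n × Fin k)) := wd_subset hwd hWU
  by_cases hex : ∃ p ∈ W, r p.1 (π p.1) + γ * ∑ t, P p.1 (π p.1) t * polValue P r γ σ t
      ≤ polValue P r γ σ p.1
  · obtain ⟨p, hpW, hp⟩ := hex
    refine ⟨p, hpW, ?_⟩
    apply dominated_of hP0 hP1 hγ0 hγ1
    intro s
    have hwdE : WellDefined (↑(W.erase p) : Set (Fin n × Fin k)) :=
      wd_subset hwdW (by exact_mod_cast Finset.coe_subset.mpr (Finset.erase_subset p W))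
    by_cases hcase : s = p.1
    · have hsp : ((s, p.2) : Fin n × Fin k) = p := Prod.ext hcase rfl
      have huncov : ¬∃ b, (s, b) ∈ (↑(W.erase p) : Set (Fin n × Fin k)) := by
        rintro ⟨b, hb⟩
        have hbW : (s, b) ∈ W := Finset.mem_of_mem_erase (by exact_mod_cast hb)
        have hb2 : b = p.2 := hwdW s b p.2 (by exact_mod_cast hbW)
          (by rw [hsp]; exact_mod_cast hpW)
        have heqp : ((s, b) : Fin n × Fin k) = p := by rw [hb2]; exact hsp
        exact (Finset.mem_erase.mp (by exact_mod_cast hb)).1 heqp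
      rw [switch_uncovered huncov, hcase]
      exact hp
    · by_cases hex2 : ∃ b, (s, b) ∈ (↑W : Set (Fin n × Fin k))
      · obtain ⟨b, hb⟩ := hex2
        have hbE : (s, b) ∈ (↑(W.erase p) : Set (Fin n × Fin k)) := by
          have : (s, b) ∈ W.erase p := Finset.mem_erase.mpr
            ⟨fun hEq => hcase (by rw [← hEq]), by exact_mod_cast hb⟩
          exact_mod_cast this
        rw [switch_covered hwdE hbE, ← switch_covered (π := π) hwdW hb, ← hσ]
        exact le_of_eq (bellman hP0 hP1 hγ0 hγ1 σ s).symm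
      · have hex2' : ¬∃ b, (s, b) ∈ (↑(W.erase p) : Set (Fin n × Fin k)) := by
          rintro ⟨b, hb⟩
          exact hex2 ⟨b, by exact_mod_cast Finset.mem_of_mem_erase (by exact_mod_cast hb)⟩
        rw [switch_uncovered hex2']
        have hσs : σ s = π s := switch_uncovered hex2
        rw [← hσs]
        exact le_of_eq (bellman hP0 hP1 hγ0 hγ1 σ s).symm
  · exfalso
    push_neg at hex
    have hdom1 : Dominates P r γ σ π := by
      apply dominates_of hP0 hP1 hγ0 hγ1
      intro s
      by_cases hex2 : ∃ b, (s, b) ∈ (↑W : Set (Fin n × Fin k))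
      · obtain ⟨b, hb⟩ := hex2
        exact le_of_lt (hex (s, b) (by exact_mod_cast hb))
      · have hσs : σ s = π s := switch_uncovered hex2
        conv_rhs => rw [← hσs]
        exact le_of_eq (bellman hP0 hP1 hγ0 hγ1 σ s)
    have hdom2 : Dominates P r γ π σ := F1 hP0 hP1 hγ0 hγ1 hwd hsub hWU
    obtain ⟨p, hp⟩ := hne
    have heq : ∀ t, polValue P r γ σ t = polValue P r γ π t :=
      fun t => le_antisymm (hdom1 t) (hdom2 t)
    have hlt := hex p hp
    rw [heq p.1] at hlt
    rw [Finset.sum_congr rfl (fun t _ => by rw [heq t])] at hlt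
    rw [← bellman hP0 hP1 hγ0 hγ1 π p.1] at hlt
    exact lt_irrefl _ hlt

lemma chain {π : Fin n → Fin k} {U : Set (Fin n × Fin k)} (hwd : WellDefined U)
    (hsub : U ⊆ improvementSet P r γ π) :
    ∀ (m : ℕ) (W : Finset (Fin n × Fin k)), ↑W ⊆ U → W.card = m →
    ∃ c : ℕ → Finset (Fin n × Fin k),
      c m = W ∧ (∀ j, (↑(c j) : Set (Fin n × Fin k)) ⊆ U) ∧
      (∀ j, j ≤ m → (c j).card = j) ∧
      (∀ j, j < m → c j ⊆ c (j+1)) ∧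
      (∀ j, j < m → Dominates P r γ (switch π ↑(c j)) (switch π ↑(c (j+1)))) := by
  intro m
  induction m with
  | zero =>
    intro W hWU hcard
    refine ⟨fun _ => ∅, (Finset.card_eq_zero.mp hcard).symm, by simp, ?_, by omega, by omega⟩
    intro j hj
    simp [Nat.le_zero.mp hj]
  | succ m ih =>
    intro W hWU hcard
    have hne : W.Nonempty := Finset.card_pos.mp (by omega)
    obtain ⟨p, hpW, hdom⟩ := F2 hP0 hP1 hγ0 hγ1 hwd hsub W hWU hne
    have hEcard : (W.erase p).card = m := by
      rw [Finset.card_erase_of_mem hpW, hcard]; omega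
    have hEU : ↑(W.erase p) ⊆ U :=
      subset_trans (by exact_mod_cast Finset.coe_subset.mpr (Finset.erase_subset p W)) hWU
    obtain ⟨c, hc0, hcU, hccard, hcsub, hcdom⟩ := ih (W.erase p) hEU hEcard
    refine ⟨fun j => if j = m + 1 then W else c j, by simp, ?_, ?_, ?_, ?_⟩
    · intro j
      by_cases hj : j = m + 1 <;> simp [hj, hWU, hcU]
    · intro j hj
      by_cases hjm : j = m + 1
      · simp [hjm, hcard]
      · have : j ≤ m := by omega
        simp [hjm, hccard j this]
    · intro j hj
      by_cases hjm : j = m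
      · subst hjm
        have h1 : j ≠ j + 1 := by omega
        simp only [h1, if_false, if_pos rfl, hc0]
        exact Finset.erase_subset p W
      · have h1 : j ≠ m + 1 := by omega
        have h2 : j + 1 ≠ m + 1 := by omega
        simp only [h1, h2, if_false]
        exact hcsub j (by omega)
    · intro j hj
      by_cases hjm : j = m
      · subst hjm
        have h1 : j ≠ j + 1 := by omega
        simp only [h1, if_false, if_pos rfl, hc0]
        exact hdom
      · have h1 : j ≠ m + 1 := by omega
        have h2 : j + 1 ≠ m + 1 := by omega
        simp only [h1, h2, if_false]
        exact hcdom j (by omega)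

end core

theorem jumping_property (n k : ℕ) (hn : 1 ≤ n) (hk : 1 ≤ k)
    (P : Fin n → Fin k → Fin n → ℝ) (r : Fin n → Fin k → ℝ) (γ : ℝ)
    (hP0 : ∀ s a s', 0 ≤ P s a s') (hP1 : ∀ s a, ∑ s', P s a s' = 1)
    (hγ0 : 0 ≤ γ) (hγ1 : γ < 1)
    (π π' : Fin n → Fin k) (U : Set (Fin n × Fin k))
    (hwd : WellDefined U) (hsub : U ⊆ improvementSet P r γ π)
    (hstates : ∀ s, (∃ a, (s, a) ∈ U) ↔ s ∈ improvementStates P r γ π)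
    (hstep : π' = switch π U) (d : ℕ)
    (hd : (improvementStates P r γ π).ncard = d) (hd1 : 1 ≤ d) :
    ∃ ρ : Fin d → Fin n → Fin k,
      Function.Injective ρ ∧
      StrictDominates P r γ π (ρ ⟨0, hd1⟩) ∧
      (∀ i : ℕ, ∀ hi : i + 1 < d,
        Dominates P r γ (ρ ⟨i, Nat.lt_of_succ_lt hi⟩) (ρ ⟨i + 1, hi⟩)) ∧
      (∀ hl : d - 1 < d, ρ ⟨d - 1, hl⟩ = π') := by
  subst hstep
  have hUfin : U.Finite := Set.toFinite U
  set W : Finset (Fin n × Fin k) := hUfin.toFinset with hWdef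
  have hWcoe : (↑W : Set (Fin n × Fin k)) = U := hUfin.coe_toFinset
  have hstates' : Prod.fst '' U = improvementStates P r γ π := by
    ext s
    constructor
    · rintro ⟨⟨s', a⟩, hp, rfl⟩
      exact (hstates s').mp ⟨a, hp⟩
    · intro hs
      obtain ⟨a, ha⟩ := (hstates s).mpr hs
      exact ⟨(s, a), ha, rfl⟩
  have hinj : Set.InjOn Prod.fst U := by
    rintro ⟨s1, a1⟩ h1 ⟨s2, a2⟩ h2 hEq
    simp only at hEq
    subst hEq
    exact Prod.ext rfl (hwd s1 a1 a2 h1 h2)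
  have hWcard : W.card = d := by
    have h1 : U.ncard = d := by
      rw [← Set.ncard_image_of_injOn hinj, hstates', hd]
    rw [← h1, Set.ncard_eq_toFinset_card U hUfin]
  obtain ⟨c, hc0, hcU, hccard, hcsub, hcdom⟩ :=
    chain hP0 hP1 hγ0 hγ1 hwd hsub d W (hWcoe ▸ subset_rfl) hWcard
  have hmono : ∀ a b, a ≤ b → b ≤ d → c a ⊆ c b := by
    intro a b hab hbd
    induction b, hab using Nat.le_induction with
    | base => exact subset_rfl
    | succ b hab ih => exact subset_trans (ih (by omega)) (hcsub b (by omega))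
  refine ⟨fun j => switch π ↑(c (j.1 + 1)), ?_, ?_, ?_, ?_⟩
  · -- injectivity
    have key : ∀ i j : Fin d, i.1 < j.1 →
        switch π ↑(c (i.1 + 1)) ≠ switch π ↑(c (j.1 + 1)) := by
      intro i j hij
      have hsubij : c (i.1 + 1) ⊆ c (j.1 + 1) := hmono _ _ (by omega) (by omega)
      have hcardi : (c (i.1 + 1)).card = i.1 + 1 := hccard _ (by omega)
      have hcardj : (c (j.1 + 1)).card = j.1 + 1 := hccard _ (by omega)
      have hssub : c (i.1 + 1) ⊂ c (j.1 + 1) :=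
        Finset.ssubset_iff_subset_ne.mpr ⟨hsubij, fun hEq => by
          rw [hEq, hcardj] at hcardi; omega⟩
      obtain ⟨p, hpj, hpi⟩ := Finset.exists_of_ssubset hssub
      have hpU : p ∈ U := hcU (j.1 + 1) (by exact_mod_cast hpj)
      have hane : p.2 ≠ π p.1 := action_ne (hsub hpU)
      have hj : switch π ↑(c (j.1 + 1)) p.1 = p.2 := by
        apply switch_covered (wd_subset hwd (hcU (j.1 + 1)))
        exact_mod_cast hpj
      have hi : switch π ↑(c (i.1 + 1)) p.1 = π p.1 := by
        apply switch_uncovered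
        rintro ⟨b, hb⟩
        have hbU : (p.1, b) ∈ U := hcU (i.1 + 1) hb
        have : b = p.2 := hwd p.1 b p.2 hbU (by rw [Prod.mk.eta]; exact hpU)
        subst this
        rw [Prod.mk.eta] at hb
        exact hpi (by exact_mod_cast hb)
      intro hEq
      have := congrFun hEq p.1
      rw [hi, hj] at this
      exact hane this.symm
    intro i j hEq
    rcases lt_trichotomy i.1 j.1 with h | h | h
    · exact absurd hEq (key i j h)
    · exact Fin.ext h
    · exact absurd hEq.symm (key j i h)
  · -- strict dominance at 0
    have h1 : (c 1).card = 1 := hccard 1 hd1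
    obtain ⟨p, hp⟩ := Finset.card_eq_one.mp h1
    have hpU : p ∈ U := hcU 1 (by rw [hp]; exact_mod_cast Finset.mem_singleton_self p)
    have hswitch : switch π ↑(c 1) = Function.update π p.1 p.2 := by
      funext t
      by_cases ht : t = p.1
      · subst ht
        rw [Function.update_self]
        apply switch_covered (wd_subset hwd (hcU 1))
        rw [hp, Prod.mk.eta]
        exact_mod_cast Finset.mem_singleton_self p
      · rw [Function.update_of_ne ht]
        apply switch_uncovered
        rintro ⟨b, hb⟩
        rw [hp] at hb
        have : ((t, b) : Fin n × Fin k) = p := by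
          have := hb; simp only [Finset.coe_singleton, Set.mem_singleton_iff] at this; exact this
        exact ht (by rw [← this])
    show StrictDominates P r γ π (switch π ↑(c (0 + 1)))
    rw [show (0 + 1 : ℕ) = 1 from rfl, hswitch]
    exact hsub hpU
  · intro i hi
    exact hcdom (i + 1) hi
  · intro hl
    show switch π ↑(c (d - 1 + 1)) = switch π U
    rw [Nat.sub_add_cancel hd1, hc0, hWcoe]
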